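/- Let x₁, x₂, x₃, x₄ ∈ Quaternion ℝ be pairwise distinct nonzero purely imaginary quaternions. Then the real part and the norm of the quaternionic cross-ratio are invariant under the inversion x ↦ x⁻¹: (q(x₁⁻¹, x₂⁻¹, x₃⁻¹, x₄⁻¹)).re = (q(x₁, x₂, x₃, x₄)).re and ‖q(x₁⁻¹, x₂⁻¹, x₃⁻¹, x₄⁻¹)‖ = ‖q(x₁, x₂, x₃, x₄)‖. -/

import Mathlib

/-- The quaternionic cross-ratio of four points. -/
noncomputable def quatCrossRatio (x₁ x₂ x₃ x₄ : Quaternion ℝ) : Quaternion ℝ :=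
  (x₁ - x₂) * (x₂ - x₃)⁻¹ * (x₃ - x₄) * (x₄ - x₁)⁻¹

open Quaternion

set_option maxHeartbeats 2000000

/-- Dot product of the imaginary parts of two quaternions. -/
def dotQ (x y : Quaternion ℝ) : ℝ := x.imI * y.imI + x.imJ * y.imJ + x.imK * y.imK

lemma pureInv (x : Quaternion ℝ) (hx : x.re = 0) :
    x⁻¹ = (-(normSq x)⁻¹ : ℝ) • x := by
  rw [Quaternion.inv_def]; ext <;> simp [hx]

lemma inv_re_zero (x : Quaternion ℝ) (hx : x.re = 0) : (x⁻¹).re = 0 := by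
  rw [pureInv x hx]; simp [hx]

lemma dot_self (x : Quaternion ℝ) (hx : x.re = 0) : dotQ x x = normSq x := by
  simp [dotQ, normSq_def', hx]; ring

lemma dotQ_comm (x y : Quaternion ℝ) : dotQ x y = dotQ y x := by
  simp [dotQ]; ring

lemma normSq_sub_pure (x y : Quaternion ℝ) (hx : x.re = 0) (hy : y.re = 0) :
    normSq (x - y) = normSq x + normSq y - 2 * dotQ x y := by
  simp only [normSq_def', dotQ, Quaternion.re_sub, Quaternion.imI_sub, Quaternion.imJ_sub,
    Quaternion.imK_sub, hx, hy]
  ring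

lemma dot_sub (x y z w : Quaternion ℝ) :
    dotQ (x - y) (z - w) = dotQ x z - dotQ x w - dotQ y z + dotQ y w := by
  simp only [dotQ, Quaternion.imI_sub, Quaternion.imJ_sub, Quaternion.imK_sub]; ring

lemma dot_sub_inv (x y z w : Quaternion ℝ) (hx : x.re = 0) (hy : y.re = 0)
    (hz : z.re = 0) (hw : w.re = 0) :
    dotQ (x⁻¹ - y⁻¹) (z⁻¹ - w⁻¹) =
      (normSq x)⁻¹ * (normSq z)⁻¹ * dotQ x z - (normSq x)⁻¹ * (normSq w)⁻¹ * dotQ x w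
      - (normSq y)⁻¹ * (normSq z)⁻¹ * dotQ y z + (normSq y)⁻¹ * (normSq w)⁻¹ * dotQ y w := by
  rw [pureInv x hx, pureInv y hy, pureInv z hz, pureInv w hw]
  simp only [dotQ, Quaternion.imI_sub, Quaternion.imJ_sub, Quaternion.imK_sub,
    Quaternion.imI_smul, Quaternion.imJ_smul, Quaternion.imK_smul, smul_eq_mul]
  ring

lemma normSq_sub_inv (x y : Quaternion ℝ) (hx : x.re = 0) (hy : y.re = 0)
    (hx0 : x ≠ 0) (hy0 : y ≠ 0) :
    normSq (x⁻¹ - y⁻¹) = normSq (x - y) * ((normSq x)⁻¹ * (normSq y)⁻¹) := by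
  have h0 : (x⁻¹ - y⁻¹).re = 0 := by
    simp [Quaternion.re_sub, inv_re_zero x hx, inv_re_zero y hy]
  rw [← dot_self _ h0, dot_sub_inv x y x y hx hy hx hy, dot_self x hx, dot_self y hy,
    dotQ_comm y x, normSq_sub_pure x y hx hy]
  have hnx : normSq x ≠ 0 := normSq_ne_zero.mpr hx0
  have hny : normSq y ≠ 0 := normSq_ne_zero.mpr hy0
  field_simp
  ring

lemma re4 (a b c d : Quaternion ℝ) (ha : a.re = 0) (hb : b.re = 0) (hc : c.re = 0)
    (hd : d.re = 0) :
    (a * b * c * d).re =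
      dotQ a b * dotQ c d - dotQ a c * dotQ b d + dotQ a d * dotQ b c := by
  simp only [dotQ, Quaternion.re_mul, Quaternion.imI_mul, Quaternion.imJ_mul,
    Quaternion.imK_mul, ha, hb, hc, hd]
  ring

lemma crossRe (a b c d : Quaternion ℝ) (hb : b.re = 0) (hd : d.re = 0) :
    (a * b⁻¹ * c * d⁻¹).re = ((normSq b)⁻¹ * (normSq d)⁻¹) * (a * b * c * d).re := by
  rw [pureInv b hb, pureInv d hd]
  simp only [mul_smul_comm, smul_mul_assoc, smul_smul, Quaternion.re_smul, smul_eq_mul]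
  ring

/-- The real part and the norm of the quaternionic cross-ratio of four pairwise
distinct nonzero purely imaginary quaternions are invariant under the inversion
`x ↦ x⁻¹`. -/
theorem quatCrossRatio_inv_invariant
    (x₁ x₂ x₃ x₄ : Quaternion ℝ)
    (h₁ : x₁.re = 0) (h₂ : x₂.re = 0) (h₃ : x₃.re = 0) (h₄ : x₄.re = 0)
    (h₁0 : x₁ ≠ 0) (h₂0 : x₂ ≠ 0) (h₃0 : x₃ ≠ 0) (h₄0 : x₄ ≠ 0)
    (h12 : x₁ ≠ x₂) (h13 : x₁ ≠ x₃) (h14 : x₁ ≠ x₄)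
    (h23 : x₂ ≠ x₃) (h24 : x₂ ≠ x₄) (h34 : x₃ ≠ x₄) :
    (quatCrossRatio x₁⁻¹ x₂⁻¹ x₃⁻¹ x₄⁻¹).re = (quatCrossRatio x₁ x₂ x₃ x₄).re ∧
      ‖quatCrossRatio x₁⁻¹ x₂⁻¹ x₃⁻¹ x₄⁻¹‖ = ‖quatCrossRatio x₁ x₂ x₃ x₄‖ := by
  have n1 : normSq x₁ ≠ 0 := normSq_ne_zero.mpr h₁0
  have n2 : normSq x₂ ≠ 0 := normSq_ne_zero.mpr h₂0
  have n3 : normSq x₃ ≠ 0 := normSq_ne_zero.mpr h₃0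
  have n4 : normSq x₄ ≠ 0 := normSq_ne_zero.mpr h₄0
  have i₁ := inv_re_zero x₁ h₁
  have i₂ := inv_re_zero x₂ h₂
  have i₃ := inv_re_zero x₃ h₃
  have i₄ := inv_re_zero x₄ h₄
  have hare : (x₁⁻¹ - x₂⁻¹).re = 0 := by simp [Quaternion.re_sub, i₁, i₂]
  have hbre : (x₂⁻¹ - x₃⁻¹).re = 0 := by simp [Quaternion.re_sub, i₂, i₃]
  have hcre : (x₃⁻¹ - x₄⁻¹).re = 0 := by simp [Quaternion.re_sub, i₃, i₄]
  have hdre : (x₄⁻¹ - x₁⁻¹).re = 0 := by simp [Quaternion.re_sub, i₄, i₁]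
  have hare' : (x₁ - x₂).re = 0 := by simp [Quaternion.re_sub, h₁, h₂]
  have hbre' : (x₂ - x₃).re = 0 := by simp [Quaternion.re_sub, h₂, h₃]
  have hcre' : (x₃ - x₄).re = 0 := by simp [Quaternion.re_sub, h₃, h₄]
  have hdre' : (x₄ - x₁).re = 0 := by simp [Quaternion.re_sub, h₄, h₁]
  have nb : normSq (x₂ - x₃) ≠ 0 := normSq_ne_zero.mpr (sub_ne_zero.mpr h23)
  have nd : normSq (x₄ - x₁) ≠ 0 := normSq_ne_zero.mpr (sub_ne_zero.mpr (Ne.symm h14))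
  have NA := normSq_sub_inv x₁ x₂ h₁ h₂ h₁0 h₂0
  have NB := normSq_sub_inv x₂ x₃ h₂ h₃ h₂0 h₃0
  have NC := normSq_sub_inv x₃ x₄ h₃ h₄ h₃0 h₄0
  have ND := normSq_sub_inv x₄ x₁ h₄ h₁ h₄0 h₁0
  constructor
  · unfold quatCrossRatio
    rw [crossRe _ _ _ _ hbre hdre, crossRe _ _ _ _ hbre' hdre',
      re4 _ _ _ _ hare hbre hcre hdre, re4 _ _ _ _ hare' hbre' hcre' hdre',
      NB, ND,
      dot_sub_inv x₁ x₂ x₂ x₃ h₁ h₂ h₂ h₃, dot_sub_inv x₃ x₄ x₄ x₁ h₃ h₄ h₄ h₁,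
      dot_sub_inv x₁ x₂ x₃ x₄ h₁ h₂ h₃ h₄, dot_sub_inv x₂ x₃ x₄ x₁ h₂ h₃ h₄ h₁,
      dot_sub_inv x₁ x₂ x₄ x₁ h₁ h₂ h₄ h₁, dot_sub_inv x₂ x₃ x₃ x₄ h₂ h₃ h₃ h₄,
      dot_sub x₁ x₂ x₂ x₃, dot_sub x₃ x₄ x₄ x₁,
      dot_sub x₁ x₂ x₃ x₄, dot_sub x₂ x₃ x₄ x₁,
      dot_sub x₁ x₂ x₄ x₁, dot_sub x₂ x₃ x₃ x₄]
    simp only [dotQ_comm x₂ x₁, dotQ_comm x₃ x₁, dotQ_comm x₄ x₁, dotQ_comm x₃ x₂,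
      dotQ_comm x₄ x₂, dotQ_comm x₄ x₃, dot_self x₁ h₁, dot_self x₂ h₂, dot_self x₃ h₃,
      dot_self x₄ h₄]
    field_simp
    ring
  · have key : normSq (quatCrossRatio x₁⁻¹ x₂⁻¹ x₃⁻¹ x₄⁻¹) =
        normSq (quatCrossRatio x₁ x₂ x₃ x₄) := by
      unfold quatCrossRatio
      simp only [map_mul, normSq_inv, NA, NB, NC, ND]
      field_simp
    have e1 := normSq_eq_norm_mul_self (quatCrossRatio x₁⁻¹ x₂⁻¹ x₃⁻¹ x₄⁻¹)
    have e2 := normSq_eq_norm_mul_self (quatCrossRatio x₁ x₂ x₃ x₄)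
    rw [e1, e2] at key
    exact (mul_self_inj (norm_nonneg _) (norm_nonneg _)).mp key
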